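/- Let u : ℝⁿ → ℝᵐ be of class C² and W : ℝᵐ → ℝ of class C¹, and let T(u) be the associated stress tensor. Then for each j = 1, …, n, the j-th component of the divergence of T satisfies Σᵢ ∂T_{ij}(u)/∂xᵢ = (∂u/∂xⱼ) · (Δu − ∇W(u)). In particular, if u solves Δu − ∇W(u) = 0, then T(u) is divergence-free. -/

import Mathlib

open MeasureTheory Filter Metric Real RealInnerProductSpace

noncomputable section

/-- The `i`-th partial derivative of `u : ℝⁿ → ℝᵐ`. -/
def pder {n m : ℕ} (i : Fin n) (u : EuclideanSpace ℝ (Fin n) → EuclideanSpace ℝ (Fin m))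
    (x : EuclideanSpace ℝ (Fin n)) : EuclideanSpace ℝ (Fin m) :=
  fderiv ℝ u x (EuclideanSpace.single i 1)

/-- The Laplacian of `u : ℝⁿ → ℝᵐ`. -/
def vlap {n m : ℕ} (u : EuclideanSpace ℝ (Fin n) → EuclideanSpace ℝ (Fin m))
    (x : EuclideanSpace ℝ (Fin n)) : EuclideanSpace ℝ (Fin m) :=
  ∑ i, pder i (fun y => pder i u y) x

/-- The squared Frobenius norm `|∇u(x)|²` of the Jacobian of `u`. -/
def gradNormSq {n m : ℕ} (u : EuclideanSpace ℝ (Fin n) → EuclideanSpace ℝ (Fin m))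
    (x : EuclideanSpace ℝ (Fin n)) : ℝ :=
  ∑ i, ‖pder i u x‖ ^ 2

/-- The stress tensor associated to `u` and the potential `W`:
`T_{ij}(u)(x) = u_{,i}·u_{,j} − δ_{ij} (½|∇u(x)|² + W(u(x)))`. -/
def stress {n m : ℕ} (W : EuclideanSpace ℝ (Fin m) → ℝ)
    (u : EuclideanSpace ℝ (Fin n) → EuclideanSpace ℝ (Fin m))
    (x : EuclideanSpace ℝ (Fin n)) (i j : Fin n) : ℝ :=
  ⟪pder i u x, pder j u x⟫ -
    (if i = j then (1 : ℝ) else 0) * ((1 / 2) * gradNormSq u x + W (u x))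

section aux

variable {n m : ℕ} {u : EuclideanSpace ℝ (Fin n) → EuclideanSpace ℝ (Fin m)}
  {W : EuclideanSpace ℝ (Fin m) → ℝ}

lemma hpd (hu : ContDiff ℝ 2 u) (i : Fin n) (y : EuclideanSpace ℝ (Fin n)) :
    HasFDerivAt (pder i u)
      ((ContinuousLinearMap.apply ℝ (EuclideanSpace ℝ (Fin m))
          (EuclideanSpace.single i 1)).comp (fderiv ℝ (fderiv ℝ u) y)) y := by
  have hf' : ContDiff ℝ 1 (fderiv ℝ u) := hu.fderiv_right (by norm_num)
  exact (ContinuousLinearMap.apply ℝ (EuclideanSpace ℝ (Fin m))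
    (EuclideanSpace.single i 1)).hasFDerivAt.comp y (hf'.differentiable (by norm_num) y).hasFDerivAt

lemma grad_inner (hW : ContDiff ℝ 1 W) (y : EuclideanSpace ℝ (Fin m))
    (v : EuclideanSpace ℝ (Fin m)) : ⟪gradient W y, v⟫ = fderiv ℝ W y v := by
  rw [← InnerProductSpace.toDual_apply_apply]
  simp [gradient]

end aux

/-- The j-th component of the divergence of the stress tensor equals
`u_{,j} · (Δu − ∇W(u))`; in particular for solutions of the Allen–Cahn system the
stress tensor is divergence-free. -/
theorem stress_div_eq (n m : ℕ)
    (u : EuclideanSpace ℝ (Fin n) → EuclideanSpace ℝ (Fin m))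
    (W : EuclideanSpace ℝ (Fin m) → ℝ)
    (hu : ContDiff ℝ 2 u) (hW : ContDiff ℝ 1 W) :
    (∀ (x : EuclideanSpace ℝ (Fin n)) (j : Fin n),
      ∑ i, fderiv ℝ (fun y => stress W u y i j) x (EuclideanSpace.single i 1) =
        ⟪pder j u x, vlap u x - gradient W (u x)⟫) ∧
    ((∀ x, vlap u x - gradient W (u x) = 0) →
      ∀ (x : EuclideanSpace ℝ (Fin n)) (j : Fin n),
        ∑ i, fderiv ℝ (fun y => stress W u y i j) x (EuclideanSpace.single i 1) = 0) := by
  have key : ∀ (x : EuclideanSpace ℝ (Fin n)) (j : Fin n),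
      ∑ i, fderiv ℝ (fun y => stress W u y i j) x (EuclideanSpace.single i 1) =
        ⟪pder j u x, vlap u x - gradient W (u x)⟫ := by
    intro x j
    set e : Fin n → EuclideanSpace ℝ (Fin n) := fun i => EuclideanSpace.single i 1 with he
    set A : Fin n → Fin n → EuclideanSpace ℝ (Fin m) :=
      fun i k => fderiv ℝ (fderiv ℝ u) x (e i) (e k) with hA
    have hud : Differentiable ℝ u := hu.differentiable (by norm_num)
    have hWd : Differentiable ℝ W := hW.differentiable (by norm_num)
    have hpdiff : ∀ k : Fin n, Differentiable ℝ (pder k u) :=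
      fun k y => (hpd hu k y).differentiableAt
    have hAfd : ∀ i k : Fin n, fderiv ℝ (pder k u) x (e i) = A i k := by
      intro i k
      rw [(hpd hu k x).fderiv]; rfl
    have hsym : ∀ i k : Fin n, A i k = A k i := by
      intro i k
      exact (hu.contDiffAt.isSymmSndFDerivAt (by norm_num)) (e i) (e k)
    have hvlap : vlap u x = ∑ i, A i i := by
      unfold vlap
      refine Finset.sum_congr rfl fun i _ => ?_
      have : pder i (fun y => pder i u y) x = fderiv ℝ (pder i u) x (e i) := rfl
      rw [this, hAfd]
    -- gradNormSq as sum of inner products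
    have hgns : gradNormSq u = fun y => ∑ k, ⟪pder k u y, pder k u y⟫ := by
      funext y
      exact Finset.sum_congr rfl fun k _ => (real_inner_self_eq_norm_sq _).symm
    have hgnsd : DifferentiableAt ℝ (gradNormSq u) x := by
      rw [hgns]
      exact DifferentiableAt.fun_sum fun k _ =>
        ((hpdiff k x).inner ℝ (hpdiff k x))
    have hWud : DifferentiableAt ℝ (fun y => W (u y)) x :=
      (hWd (u x)).comp x (hud x)
    have hGd : DifferentiableAt ℝ
        (fun y => (1 / 2 : ℝ) * gradNormSq u y + W (u y)) x :=
      ((hgnsd.const_mul _).add hWud)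
    -- derivative of G
    have hGfd : fderiv ℝ (fun y => (1 / 2 : ℝ) * gradNormSq u y + W (u y)) x (e j) =
        (∑ k, ⟪pder k u x, A j k⟫) + ⟪gradient W (u x), pder j u x⟫ := by
      rw [fderiv_fun_add (hgnsd.const_mul _) hWud]
      rw [ContinuousLinearMap.add_apply]
      congr 1
      · rw [fderiv_const_mul hgnsd]
        rw [ContinuousLinearMap.smul_apply]
        have : fderiv ℝ (gradNormSq u) x (e j) = ∑ k, (2 : ℝ) * ⟪pder k u x, A j k⟫ := by
          rw [hgns, fderiv_fun_sum (fun k _ => (hpdiff k x).inner ℝ (hpdiff k x))]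
          rw [ContinuousLinearMap.sum_apply]
          refine Finset.sum_congr rfl fun k _ => ?_
          rw [fderiv_inner_apply ℝ (hpdiff k x) (hpdiff k x), hAfd]
          rw [real_inner_comm (A j k) (pder k u x)]
          ring
        rw [this, smul_eq_mul, Finset.mul_sum]
        exact Finset.sum_congr rfl fun k _ => by ring
      · rw [show (fun y => W (u y)) = W ∘ u from rfl,
          fderiv_comp x (hWd (u x)) (hud x), ContinuousLinearMap.comp_apply]
        rw [← grad_inner hW]
        rfl
    -- derivative of each stress entry
    have hstress : ∀ i : Fin n,
        fderiv ℝ (fun y => stress W u y i j) x (e i) =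
          (⟪pder i u x, A i j⟫ + ⟪A i i, pder j u x⟫) -
            (if i = j then (1 : ℝ) else 0) *
              fderiv ℝ (fun y => (1 / 2 : ℝ) * gradNormSq u y + W (u y)) x (e i) := by
      intro i
      have hinnd : DifferentiableAt ℝ (fun y => ⟪pder i u y, pder j u y⟫) x :=
        (hpdiff i x).inner ℝ (hpdiff j x)
      have h1 : (fun y => stress W u y i j) =
          fun y => ⟪pder i u y, pder j u y⟫ -
            (if i = j then (1 : ℝ) else 0) *
              ((1 / 2 : ℝ) * gradNormSq u y + W (u y)) := rfl
      rw [h1, fderiv_fun_sub hinnd (hGd.const_mul _), ContinuousLinearMap.sub_apply,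
        fderiv_const_mul hGd, ContinuousLinearMap.smul_apply,
        fderiv_inner_apply ℝ (hpdiff i x) (hpdiff j x), hAfd, hAfd]
      rw [smul_eq_mul]
    calc ∑ i, fderiv ℝ (fun y => stress W u y i j) x (e i)
        = ∑ i, ((⟪pder i u x, A i j⟫ + ⟪A i i, pder j u x⟫) -
            (if i = j then (1 : ℝ) else 0) *
              fderiv ℝ (fun y => (1 / 2 : ℝ) * gradNormSq u y + W (u y)) x (e i)) :=
          Finset.sum_congr rfl fun i _ => hstress i
      _ = (∑ i, ⟪pder i u x, A i j⟫) + ⟪∑ i, A i i, pder j u x⟫ -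
            ((∑ k, ⟪pder k u x, A j k⟫) + ⟪gradient W (u x), pder j u x⟫) := by
          rw [Finset.sum_sub_distrib, Finset.sum_add_distrib, sum_inner]
          congr 1
          have : ∀ i : Fin n, (if i = j then (1 : ℝ) else 0) *
              fderiv ℝ (fun y => (1 / 2 : ℝ) * gradNormSq u y + W (u y)) x (e i) =
              if i = j then
                fderiv ℝ (fun y => (1 / 2 : ℝ) * gradNormSq u y + W (u y)) x (e i)
              else 0 := by
            intro i; split <;> ring
          rw [Finset.sum_congr rfl fun i _ => this i, Finset.sum_ite_eq',
            if_pos (Finset.mem_univ j), hGfd]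
      _ = ⟪pder j u x, vlap u x - gradient W (u x)⟫ := by
          have hcancel : (∑ i, ⟪pder i u x, A i j⟫) = ∑ k, ⟪pder k u x, A j k⟫ :=
            Finset.sum_congr rfl fun i _ => by rw [hsym i j]
          rw [hcancel, hvlap, inner_sub_right, real_inner_comm (pder j u x),
            real_inner_comm (pder j u x)]
          ring
  refine ⟨key, fun h x j => ?_⟩
  rw [key x j, h x, inner_zero_right]
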